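/- arXiv:2601.17960 — 4 statements merged into one kernel-verified Lean document; each statement's English description precedes it below -/
import Mathlib

section
/- Let Φ : Matrix n n ℂ →ₗ[ℂ] Matrix m m ℂ be a linear map that is positive (it maps every positive semidefinite matrix to a positive semidefinite matrix) and trace-preserving (trace(Φ A) = trace A for every A). Then for every Hermitian matrix H ∈ Matrix n n ℂ, ‖Φ H‖₁ ≤ ‖H‖₁. -/
open scoped ComplexOrder

/-- The trace norm `‖A‖₁` of a complex matrix `A`: the trace of the positive
semidefinite square root of `Aᴴ * A`. -/
noncomputable def traceNorm {n : Type*} [Fintype n] [DecidableEq n] (A : Matrix n n ℂ) : ℝ :=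
  ((Matrix.posSemidef_conjTranspose_mul_self A).1.eigenvectorUnitary.1 *
    Matrix.diagonal (((↑) : ℝ → ℂ) ∘ (Real.sqrt ·) ∘
      (Matrix.posSemidef_conjTranspose_mul_self A).1.eigenvalues) *
    (star (Matrix.posSemidef_conjTranspose_mul_self A).1.eigenvectorUnitary :
      Matrix n n ℂ)).trace.re

namespace TraceNormAux

open Matrix
open scoped MatrixOrder

variable {k : Type*} [Fintype k] [DecidableEq k]

/-- Conjugate a real diagonal by the eigenvector unitary of a Hermitian matrix. -/
noncomputable def cd {M : Matrix k k ℂ} (hM : M.IsHermitian) (d : k → ℝ) : Matrix k k ℂ :=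
  (hM.eigenvectorUnitary : Matrix k k ℂ) * diagonal (fun i => (d i : ℂ)) *
    star (hM.eigenvectorUnitary : Matrix k k ℂ)

lemma cd_mul {M : Matrix k k ℂ} (hM : M.IsHermitian) (d e : k → ℝ) :
    cd hM d * cd hM e = cd hM (fun i => d i * e i) := by
  have h1 : star (hM.eigenvectorUnitary : Matrix k k ℂ) *
      (hM.eigenvectorUnitary : Matrix k k ℂ) = 1 := hM.eigenvectorUnitary.2.1
  simp only [cd, Matrix.mul_assoc]
  rw [← Matrix.mul_assoc (star _) _ , h1, Matrix.one_mul, ← Matrix.mul_assoc (diagonal _),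
    diagonal_mul_diagonal]
  push_cast
  rfl

lemma cd_eig {M : Matrix k k ℂ} (hM : M.IsHermitian) : cd hM hM.eigenvalues = M := by
  rw [cd]
  exact hM.spectral_theorem.symm

lemma cd_trace {M : Matrix k k ℂ} (hM : M.IsHermitian) (d : k → ℝ) :
    (cd hM d).trace = ((∑ i, d i : ℝ) : ℂ) := by
  have h1 : star (hM.eigenvectorUnitary : Matrix k k ℂ) *
      (hM.eigenvectorUnitary : Matrix k k ℂ) = 1 := hM.eigenvectorUnitary.2.1
  rw [cd, Matrix.trace_mul_comm, ← Matrix.mul_assoc, h1, Matrix.one_mul, trace_diagonal]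
  push_cast
  rfl

lemma cd_psd {M : Matrix k k ℂ} (hM : M.IsHermitian) (d : k → ℝ) (hd : ∀ i, 0 ≤ d i) :
    (cd hM d).PosSemidef := by
  rw [cd, Matrix.star_eq_conjTranspose]
  exact (PosSemidef.diagonal fun i => by simpa using hd i).mul_mul_conjTranspose_same _

lemma cd_sub {M : Matrix k k ℂ} (hM : M.IsHermitian) (d e : k → ℝ) :
    cd hM d - cd hM e = cd hM (fun i => d i - e i) := by
  simp only [cd, ← Matrix.sub_mul, ← Matrix.mul_sub, diagonal_sub]
  push_cast
  rfl

lemma cd_add {M : Matrix k k ℂ} (hM : M.IsHermitian) (d e : k → ℝ) :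
    cd hM d + cd hM e = cd hM (fun i => d i + e i) := by
  simp only [cd, ← Matrix.add_mul, ← Matrix.mul_add, diagonal_add]
  push_cast
  rfl

lemma cd_one {M : Matrix k k ℂ} (hM : M.IsHermitian) : cd hM (fun _ => 1) = 1 := by
  have h2 : (hM.eigenvectorUnitary : Matrix k k ℂ) *
      star (hM.eigenvectorUnitary : Matrix k k ℂ) = 1 := hM.eigenvectorUnitary.2.2
  simp only [cd, Complex.ofReal_one, diagonal_one, Matrix.mul_one, h2]

lemma sqrt_eq_cd_abs {M : Matrix k k ℂ} (hM : M.IsHermitian) :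
    cd (Matrix.posSemidef_conjTranspose_mul_self M).1
      (fun i => Real.sqrt ((Matrix.posSemidef_conjTranspose_mul_self M).1.eigenvalues i)) =
      cd hM (fun i => |hM.eigenvalues i|) := by
  have hP := Matrix.posSemidef_conjTranspose_mul_self M
  have e1 : CFC.sqrt (Mᴴ * M) = cd (Matrix.posSemidef_conjTranspose_mul_self M).1
      (fun i => Real.sqrt ((Matrix.posSemidef_conjTranspose_mul_self M).1.eigenvalues i)) := by
    refine CFC.sqrt_unique ?_ (cd_psd _ _ fun i => Real.sqrt_nonneg _).nonneg
    rw [cd_mul]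
    have h : (fun i => Real.sqrt ((Matrix.posSemidef_conjTranspose_mul_self M).1.eigenvalues i) *
        Real.sqrt ((Matrix.posSemidef_conjTranspose_mul_self M).1.eigenvalues i)) =
        (Matrix.posSemidef_conjTranspose_mul_self M).1.eigenvalues :=
      funext fun i => Real.mul_self_sqrt ((Matrix.posSemidef_conjTranspose_mul_self M).eigenvalues_nonneg i)
    rw [h, cd_eig]
  rw [← e1]
  refine CFC.sqrt_unique ?_ (cd_psd hM _ fun i => abs_nonneg _).nonneg
  rw [cd_mul]
  have h : (fun i => |hM.eigenvalues i| * |hM.eigenvalues i|) =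
      fun i => hM.eigenvalues i * hM.eigenvalues i :=
    funext fun i => abs_mul_abs_self _
  rw [h, ← cd_mul, cd_eig, hM.eq]

lemma traceNorm_eq_sum_abs {M : Matrix k k ℂ} (hM : M.IsHermitian) :
    traceNorm M = ∑ i, |hM.eigenvalues i| := by
  have e : traceNorm M = (cd (Matrix.posSemidef_conjTranspose_mul_self M).1
      (fun i => Real.sqrt ((Matrix.posSemidef_conjTranspose_mul_self M).1.eigenvalues i))).trace.re :=
    rfl
  rw [e, sqrt_eq_cd_abs hM, cd_trace, Complex.ofReal_re]

lemma trace_re_nonneg {X : Matrix k k ℂ} (hX : X.PosSemidef) : 0 ≤ X.trace.re := by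
  rw [Matrix.trace, Complex.re_sum]
  refine Finset.sum_nonneg fun i _ => ?_
  have := hX.re_dotProduct_nonneg (Pi.single i 1)
  simpa [dotProduct, Matrix.mulVec_single, Pi.single_apply, diag] using this

lemma trace_mul_re_nonneg {X Y : Matrix k k ℂ} (hX : X.PosSemidef) (hY : Y.PosSemidef) :
    0 ≤ (X * Y).trace.re := by
  have hs : CFC.sqrt X * CFC.sqrt X = X := CFC.sqrt_mul_sqrt_self X hX.nonneg
  rw [← hs, Matrix.mul_assoc, Matrix.trace_mul_comm]
  have : (Y * CFC.sqrt X * CFC.sqrt X).trace = (CFC.sqrt X * Y * CFC.sqrt X).trace := by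
    rw [Matrix.trace_mul_cycle]
  have hpsd : (CFC.sqrt X * Y * CFC.sqrt X).PosSemidef := by
    nth_rewrite 2 [← (CFC.sqrt_nonneg X).posSemidef.1.eq]
    exact hY.mul_mul_conjTranspose_same _
  exact trace_re_nonneg hpsd

lemma key {M A B : Matrix k k ℂ} (hA : A.PosSemidef) (hB : B.PosSemidef) (hMAB : M = A - B) :
    traceNorm M ≤ A.trace.re + B.trace.re := by
  have hM : M.IsHermitian := hMAB ▸ hA.1.sub hB.1
  set s : k → ℝ := fun i => if 0 ≤ hM.eigenvalues i then 1 else -1 with hs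
  have habs : (fun i => s i * hM.eigenvalues i) = fun i => |hM.eigenvalues i| := by
    funext i
    by_cases h : 0 ≤ hM.eigenvalues i
    · simp [hs, h, abs_of_nonneg h]
    · simp [hs, h, abs_of_neg (lt_of_not_ge h)]
  have hSM : cd hM s * M = cd hM (fun i => |hM.eigenvalues i|) := by
    have h' : cd hM s * cd hM hM.eigenvalues = cd hM (fun i => |hM.eigenvalues i|) := by
      rw [cd_mul, habs]
    rwa [cd_eig] at h' 
  have h1 : traceNorm M = (cd hM s * M).trace.re := by
    rw [traceNorm_eq_sum_abs hM, hSM, cd_trace, Complex.ofReal_re]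
  have hone : (1 : Matrix k k ℂ) = cd hM (fun _ => 1) := (cd_one hM).symm
  have hIS : (1 - cd hM s).PosSemidef := by
    rw [hone, cd_sub]
    refine cd_psd hM _ fun i => ?_
    by_cases h : 0 ≤ hM.eigenvalues i <;> simp [hs, h]
  have hIS' : (1 + cd hM s).PosSemidef := by
    rw [hone, cd_add]
    refine cd_psd hM _ fun i => ?_
    by_cases h : 0 ≤ hM.eigenvalues i <;> simp [hs, h]
  have h3 : (cd hM s * A).trace.re ≤ A.trace.re := by
    have := trace_mul_re_nonneg hIS hA
    rw [Matrix.sub_mul, Matrix.trace_sub, Matrix.one_mul] at this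
    simp only [Complex.sub_re] at this
    linarith
  have h4 : -(cd hM s * B).trace.re ≤ B.trace.re := by
    have := trace_mul_re_nonneg hIS' hB
    rw [Matrix.add_mul, Matrix.trace_add, Matrix.one_mul] at this
    simp only [Complex.add_re] at this
    linarith
  have h2 : (cd hM s * M).trace = (cd hM s * A).trace - (cd hM s * B).trace := by
    have h' : cd hM s * M = cd hM s * (A - B) := congrArg (fun X => cd hM s * X) hMAB
    rw [h', Matrix.mul_sub, Matrix.trace_sub]
  rw [h1, h2]
  simp only [Complex.sub_re]
  linarith

end TraceNormAux

/-- Contractivity of the trace norm under positive trace-preserving linear maps,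
on Hermitian matrices. -/
theorem traceNorm_le_of_positive_tracePreserving
    {n m : Type*} [Fintype n] [DecidableEq n] [Fintype m] [DecidableEq m]
    (Φ : Matrix n n ℂ →ₗ[ℂ] Matrix m m ℂ)
    (hpos : ∀ A : Matrix n n ℂ, A.PosSemidef → (Φ A).PosSemidef)
    (htr : ∀ A : Matrix n n ℂ, (Φ A).trace = A.trace)
    (H : Matrix n n ℂ) (hH : H.IsHermitian) :
    traceNorm (Φ H) ≤ traceNorm H := by
  open TraceNormAux in
  set lam := hH.eigenvalues with hlam
  set P := cd hH (fun i => max (lam i) 0) with hP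
  set N := cd hH (fun i => max (-lam i) 0) with hN
  have hPpsd : P.PosSemidef := cd_psd hH _ fun i => le_max_right _ _
  have hNpsd : N.PosSemidef := cd_psd hH _ fun i => le_max_right _ _
  have hmax : (fun i => max (lam i) 0 - max (-lam i) 0) = lam := by
    funext i
    rcases le_total (lam i) 0 with h | h
    · rw [max_eq_right h, max_eq_left (neg_nonneg.mpr h)]; ring
    · rw [max_eq_left h, max_eq_right (neg_nonpos.mpr h)]; ring
  have hHPN : H = P - N := by
    rw [hP, hN, cd_sub, hmax, cd_eig]
  have hkey : traceNorm (Φ H) ≤ (Φ P).trace.re + (Φ N).trace.re := by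
    refine TraceNormAux.key (hpos P hPpsd) (hpos N hNpsd) ?_
    rw [hHPN, map_sub]
  rw [htr P, htr N, hP, hN, cd_trace, cd_trace, Complex.ofReal_re, Complex.ofReal_re] at hkey
  have hsum : (∑ i, max (lam i) 0) + ∑ i, max (-lam i) 0 = ∑ i, |hH.eigenvalues i| := by
    rw [← Finset.sum_add_distrib]
    refine Finset.sum_congr rfl fun i _ => ?_
    rcases le_total (lam i) 0 with h | h
    · rw [max_eq_right h, max_eq_left (neg_nonneg.mpr h), abs_of_nonpos h, hlam]; ring
    · rw [max_eq_left h, max_eq_right (neg_nonpos.mpr h), abs_of_nonneg h, hlam]; ring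
  rw [traceNorm_eq_sum_abs hH]
  linarith
end

section
/- Fix L : ℕ, a finite type C and a finite dimension type d. The ideal map R, sending ρ : K × K × C → Matrix d d ℂ to (R ρ)(k_A, k_B, c) = w(k_A, k_B) • ∑ over pairs (k'_A, k'_B) with len k'_A = len k_A and len k'_B = len k_B of ρ(k'_A, k'_B, c), is positive (if every ρ(k_A, k_B, c) is positive semidefinite then so is every (R ρ)(k_A, k_B, c)) and total-trace-preserving (∑ over (k_A, k_B, c) of trace((R ρ)(k_A, k_B, c)) equals ∑ over (k_A, k_B, c) of trace(ρ(k_A, k_B, c))). -/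
open scoped ComplexOrder

/-- The key alphabet: keys of length `l ≤ L`, i.e. pairs of a length `l : Fin (L+1)`
and a bitstring of that length. -/
abbrev Key (L : ℕ) := Σ l : Fin (L+1), (Fin (l : ℕ) → Bool)

/-- The length of a key. -/
def lenKey {L : ℕ} (k : Key L) : Fin (L+1) := k.1

/-- The unique key of length `0` (the abort symbol `⊥`). -/
def botKey (L : ℕ) : Key L := ⟨0, fun _ => false⟩

/-- The ideal-key weight `w(k_A, k_B)`: `2^(-len k_A)` if the lengths agree and
`k_A = k_B`, `0` if the lengths agree but `k_A ≠ k_B`, and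
`2^(-(len k_A + len k_B))` if the lengths differ. -/
noncomputable def idealWt {L : ℕ} (kA kB : Key L) : ℝ :=
  if lenKey kA = lenKey kB then
    (if kA = kB then (2:ℝ) ^ (-((lenKey kA : ℕ) : ℤ)) else 0)
  else (2:ℝ) ^ (-(((lenKey kA : ℕ) : ℤ) + ((lenKey kB : ℕ) : ℤ)))

/-- The ideal map `R`, acting per value of the additional classical index `c`:
it replaces the key registers by ideal keys, weighting by `idealWt` and summing the
input state over all key pairs with the same pair of lengths. -/
noncomputable def idealMap {L : ℕ} {C d : Type*}
    (ρ : Key L × Key L × C → Matrix d d ℂ) : Key L × Key L × C → Matrix d d ℂ :=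
  fun p => idealWt p.1 p.2.1 •
    ∑ q : Key L × Key L,
      if lenKey q.1 = lenKey p.1 ∧ lenKey q.2 = lenKey p.2.1
        then ρ (q.1, q.2, p.2.2) else 0

lemma sum_if_len {L : ℕ} (l : Fin (L+1)) (f : Key L → ℝ) :
    ∑ k : Key L, (if l = lenKey k then f k else 0) = ∑ s : Fin (l:ℕ) → Bool, f ⟨l, s⟩ := by
  rw [show (Finset.univ : Finset (Key L)) = Finset.univ.sigma (fun _ => Finset.univ) by
    ext k; simp]
  rw [Finset.sum_sigma]
  simp only [lenKey]
  rw [Finset.sum_eq_single l]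
  · simp
  · intro b _ hb; simp [Ne.symm hb]
  · simp

lemma two_pow_mul {n : ℕ} : (2:ℝ) ^ n * (2:ℝ) ^ (-(n:ℤ)) = 1 := by
  rw [zpow_neg, zpow_natCast]
  exact mul_inv_cancel₀ (by positivity)

lemma key_wt_sum {L : ℕ} (l1 l2 : Fin (L+1)) :
    ∑ k : Key L × Key L,
      (if l1 = lenKey k.1 ∧ l2 = lenKey k.2 then idealWt k.1 k.2 else 0) = 1 := by
  rw [Fintype.sum_prod_type]
  have : ∀ kA : Key L, ∑ kB : Key L,
      (if l1 = lenKey kA ∧ l2 = lenKey kB then idealWt kA kB else 0)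
      = if l1 = lenKey kA then
          ∑ kB : Key L, (if l2 = lenKey kB then idealWt kA kB else 0) else 0 := by
    intro kA
    split
    · next h => simp [h]
    · next h => simp [h]
  simp only [this]
  rw [sum_if_len l1 (fun kA => ∑ kB : Key L, (if l2 = lenKey kB then idealWt kA kB else 0))]
  have inner : ∀ s1 : Fin (l1:ℕ) → Bool,
      ∑ kB : Key L, (if l2 = lenKey kB then idealWt ⟨l1, s1⟩ kB else 0)
      = ∑ s2 : Fin (l2:ℕ) → Bool, idealWt ⟨l1, s1⟩ ⟨l2, s2⟩ :=
    fun s1 => sum_if_len l2 _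
  simp only [inner]
  by_cases h : l1 = l2
  · subst h
    have wt : ∀ s1 s2 : Fin (l1:ℕ) → Bool,
        idealWt (L := L) ⟨l1, s1⟩ ⟨l1, s2⟩
          = if s1 = s2 then (2:ℝ) ^ (-((l1:ℕ):ℤ)) else 0 := by
      intro s1 s2
      simp only [idealWt, lenKey]
      simp [Sigma.mk.inj_iff]
    simp only [wt]
    simp [Finset.sum_ite_eq, two_pow_mul]
  · have wt : ∀ (s1 : Fin (l1:ℕ) → Bool) (s2 : Fin (l2:ℕ) → Bool),
        idealWt (L := L) ⟨l1, s1⟩ ⟨l2, s2⟩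
          = (2:ℝ) ^ (-(((l1:ℕ):ℤ) + ((l2:ℕ):ℤ))) := by
      intro s1 s2
      simp only [idealWt, lenKey]
      simp [h]
    simp only [wt, Finset.sum_const, Finset.card_univ, nsmul_eq_mul]
    rw [neg_add, zpow_add₀ (by norm_num : (2:ℝ) ≠ 0)]
    simp only [Fintype.card_fun, Fintype.card_bool, Fintype.card_fin]
    push_cast
    rw [show ∀ a b c d : ℝ, a * (b * (c * d)) = (a*c)*(b*d) from fun a b c d => by ring,
      two_pow_mul, two_pow_mul, one_mul]

lemma idealWt_nonneg {L : ℕ} (kA kB : Key L) : 0 ≤ idealWt kA kB := by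
  unfold idealWt; split
  · split <;> positivity
  · positivity

lemma psd_smul_real {d : Type*} [Fintype d] {r : ℝ} (hr : 0 ≤ r)
    {M : Matrix d d ℂ} (hM : M.PosSemidef) : (r • M).PosSemidef := by
  have h : r • M = (r : ℂ) • M := by ext i j; simp [Complex.real_smul]
  rw [h]
  constructor
  · unfold Matrix.IsHermitian
    rw [Matrix.conjTranspose_smul, hM.1]
    simp [Complex.ext_iff]
  · intro x
    exact (hM.smul (by exact_mod_cast hr : (0:ℂ) ≤ (r:ℂ))).2 x

lemma psd_add {d : Type*} [Fintype d] {A B : Matrix d d ℂ}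
    (hA : A.PosSemidef) (hB : B.PosSemidef) : (A + B).PosSemidef := by
  refine ⟨hA.1.add hB.1, fun x => ?_⟩
  exact (hA.add hB).2 x

lemma psd_sum {d ι : Type*} [Fintype d] (s : Finset ι) (f : ι → Matrix d d ℂ)
    (h : ∀ i ∈ s, (f i).PosSemidef) : (∑ i ∈ s, f i).PosSemidef :=
  Finset.sum_induction f _ (fun _ _ => psd_add) Matrix.PosSemidef.zero h

/-- The ideal map is positive (preserves positive semidefiniteness of all entries) and
total-trace-preserving. -/
theorem idealMap_positive_and_tracePreserving (L : ℕ) (C d : Type*) [Fintype C]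
    [Fintype d] [DecidableEq d] :
    (∀ ρ : Key L × Key L × C → Matrix d d ℂ,
        (∀ p, (ρ p).PosSemidef) → ∀ p, ((idealMap ρ) p).PosSemidef) ∧
    (∀ ρ : Key L × Key L × C → Matrix d d ℂ,
        ∑ p : Key L × Key L × C, ((idealMap ρ) p).trace =
          ∑ p : Key L × Key L × C, (ρ p).trace) := by
  constructor
  · intro ρ hρ p
    refine psd_smul_real (idealWt_nonneg _ _) (psd_sum _ _ fun q _ => ?_)
    split
    · exact hρ _
    · exact Matrix.PosSemidef.zero
  · intro ρ
    simp only [idealMap, Matrix.trace_smul, Matrix.trace_sum,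
      apply_ite Matrix.trace, Matrix.trace_zero, Finset.smul_sum, smul_ite, smul_zero]
    rw [Finset.sum_comm]
    simp only [Fintype.sum_prod_type]
    refine Finset.sum_congr rfl fun qA _ => Finset.sum_congr rfl fun qB _ => ?_
    have step : ∀ (pA pB : Key L) (c : C),
        (if lenKey qA = lenKey pA ∧ lenKey qB = lenKey pB
          then idealWt pA pB • (ρ (qA, qB, c)).trace else 0)
        = (if lenKey qA = lenKey pA ∧ lenKey qB = lenKey pB
            then ((idealWt pA pB : ℝ) : ℂ) else 0) * (ρ (qA, qB, c)).trace := by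
      intro pA pB c
      split
      · rw [Complex.real_smul]
      · rw [zero_mul]
    simp only [step, ← Finset.mul_sum, ← Finset.sum_mul]
    have hg : (∑ pA : Key L, ∑ pB : Key L,
        if lenKey qA = lenKey pA ∧ lenKey qB = lenKey pB
          then ((idealWt pA pB : ℝ) : ℂ) else 0) = 1 := by
      have h := key_wt_sum (L := L) (lenKey qA) (lenKey qB)
      rw [Fintype.sum_prod_type] at h
      rw [show (1:ℂ) = ((1:ℝ):ℂ) by norm_num, ← h]
      push_cast [apply_ite (fun r : ℝ => (r:ℂ))]
      ring
    rw [hg, one_mul]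
end

section
/- Fix L : ℕ, finite types C' and finite dimension types d, d'. For each pair (l_A, l_B) ∈ Fin (L+1) × Fin (L+1) let Φ(l_A, l_B) : Matrix d d ℂ →ₗ[ℂ] (C' → Matrix d' d' ℂ) be a linear map. Define E on families ρ : K × K → Matrix d d ℂ by (E ρ)(k_A, k_B, c') = Φ(len k_A, len k_B)(ρ(k_A, k_B)) c'. Let R denote the ideal map on K × K-indexed families (acting per value of the additional classical index c' on the output side). Then E ∘ R = R ∘ E, i.e. for all ρ, E (R ρ) = R (E ρ). -/
open scoped ComplexOrder

/-- The ideal map `R` on families indexed only by the two key registers. -/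
noncomputable def idealMapKK {L : ℕ} {d : Type*}
    (ρ : Key L × Key L → Matrix d d ℂ) : Key L × Key L → Matrix d d ℂ :=
  fun p => idealWt p.1 p.2 •
    ∑ q : Key L × Key L,
      if lenKey q.1 = lenKey p.1 ∧ lenKey q.2 = lenKey p.2 then ρ q else 0

/-- The key-length-conditioned communication channel determined by the family `Φ`:
its action on the non-key registers depends only on the lengths of the two keys. -/
def commMap {L : ℕ} {C' d d' : Type*}
    (Φ : Fin (L+1) × Fin (L+1) → (Matrix d d ℂ →ₗ[ℂ] (C' → Matrix d' d' ℂ)))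
    (ρ : Key L × Key L → Matrix d d ℂ) : Key L × Key L × C' → Matrix d' d' ℂ :=
  fun p => Φ (lenKey p.1, lenKey p.2.1) (ρ (p.1, p.2.1)) p.2.2

/-- A communication channel whose action depends only on the key lengths, and acts only
on the non-key registers, commutes with the ideal map. -/
theorem commMap_comm_idealMap (L : ℕ) (C' d d' : Type*)
    (Φ : Fin (L+1) × Fin (L+1) → (Matrix d d ℂ →ₗ[ℂ] (C' → Matrix d' d' ℂ)))
    (ρ : Key L × Key L → Matrix d d ℂ) :
    commMap Φ (idealMapKK ρ) = idealMap (commMap Φ ρ) := by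
  funext p
  obtain ⟨kA, kB, c⟩ := p
  simp only [commMap, idealMapKK, idealMap]
  rw [LinearMap.map_smul_of_tower, map_sum]
  simp only [Pi.smul_apply, Finset.sum_apply]
  congr 1
  refine Finset.sum_congr rfl fun q _ => ?_
  by_cases h : lenKey q.1 = lenKey kA ∧ lenKey q.2 = lenKey kB
  · simp [h.1, h.2]
  · simp [h]
end

section
/- Fix L : ℕ, a finite type C and a finite dimension type d. Let a, b : C → Bool, and for c : C define f_c : K × K → K × K by f_c(k_A, k_B) = (if a c then k_A else ⊥, if b c then k_B else ⊥). Define U on families ρ : K × K × C → Matrix d d ℂ by (U ρ)(k_A, k_B, c) = ∑ over pairs (k'_A, k'_B) with f_c(k'_A, k'_B) = (k_A, k_B) of ρ(k'_A, k'_B, c). Let R denote the ideal map acting per value of c. Then U ∘ R = R ∘ U. -/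
open scoped ComplexOrder

/-- The classically controlled key update: conditioned on `c`, each party's key is
either kept (`a c` / `b c` true) or replaced by the abort symbol `⊥`. -/
def keyErase {L : ℕ} {C : Type*} (a b : C → Bool) (c : C)
    (q : Key L × Key L) : Key L × Key L :=
  (if a c then q.1 else botKey L, if b c then q.2 else botKey L)

/-- The update channel `U` implementing the classically controlled key erasure. -/
noncomputable def updateMap {L : ℕ} {C d : Type*} (a b : C → Bool)
    (ρ : Key L × Key L × C → Matrix d d ℂ) : Key L × Key L × C → Matrix d d ℂ :=
  fun p => ∑ q : Key L × Key L,
    if keyErase a b p.2.2 q = (p.1, p.2.1) then ρ (q.1, q.2, p.2.2) else 0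

lemma lenKey_eq_zero {L : ℕ} {k : Key L} (h : lenKey k = 0) : k = botKey L := by
  obtain ⟨l, s⟩ := k
  simp only [lenKey] at h
  subst h
  unfold botKey
  congr 1
  funext i
  exact absurd i.2 (by simp)

lemma sum_key_len {L : ℕ} {M : Type*} [AddCommMonoid M] (l : Fin (L+1)) (f : Key L → M) :
    ∑ k : Key L, (if lenKey k = l then f k else 0) = ∑ s : Fin (l:ℕ) → Bool, f ⟨l, s⟩ := by
  rw [← Finset.univ_sigma_univ, Finset.sum_sigma]
  simp only [lenKey]
  rw [Finset.sum_eq_single l]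
  · simp
  · intro b _ hb; simp [hb]
  · simp

lemma sum_idealWt {L : ℕ} (kA : Key L) (l : Fin (L+1)) :
    ∑ k : Key L, (if lenKey k = l then idealWt kA k else 0)
      = (2:ℝ) ^ (-((lenKey kA : ℕ) : ℤ)) := by
  rw [sum_key_len]
  by_cases h : lenKey kA = l
  · obtain ⟨lA, sA⟩ := kA
    simp only [lenKey] at h ⊢
    subst h
    have : ∀ s : Fin (lA:ℕ) → Bool, idealWt ⟨lA, sA⟩ ⟨lA, s⟩
        = if sA = s then (2:ℝ) ^ (-((lA:ℕ):ℤ)) else 0 := by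
      intro s
      unfold idealWt lenKey
      simp [Sigma.ext_iff]
    simp only [this]
    rw [Finset.sum_ite_eq Finset.univ sA (fun _ => (2:ℝ) ^ (-((lA:ℕ):ℤ)))]
    simp
  · have : ∀ s : Fin (l:ℕ) → Bool, idealWt kA ⟨l, s⟩
        = (2:ℝ) ^ (-(((lenKey kA:ℕ):ℤ) + ((l:ℕ):ℤ))) := by
      intro s
      unfold idealWt
      rw [if_neg (by simpa [lenKey] using h)]
      rfl
    simp only [this, Finset.sum_const, Finset.card_univ, Fintype.card_fun,
      Fintype.card_bool, Fintype.card_fin, nsmul_eq_mul]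
    push_cast
    rw [← zpow_natCast (2:ℝ) (l:ℕ), ← zpow_add₀ (by norm_num : (2:ℝ) ≠ 0)]
    ring_nf

lemma idealWt_comm {L : ℕ} (kA kB : Key L) : idealWt kA kB = idealWt kB kA := by
  unfold idealWt
  by_cases h : lenKey kA = lenKey kB
  · rw [if_pos h, if_pos h.symm]
    by_cases h2 : kA = kB <;> simp [h2, eq_comm, h]
  · rw [if_neg h, if_neg (Ne.symm h)]
    ring_nf

lemma idealWt_bot {L : ℕ} (kA : Key L) :
    idealWt kA (botKey L) = (2:ℝ) ^ (-((lenKey kA : ℕ) : ℤ)) := by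
  unfold idealWt
  by_cases h : lenKey kA = lenKey (botKey L)
  · have : kA = botKey L := lenKey_eq_zero (by simpa [botKey, lenKey] using h)
    simp [this]
  · rw [if_neg h]
    simp [botKey, lenKey]

lemma sum_sum_idealWt {L : ℕ} (l1 l2 : Fin (L+1)) :
    ∑ q : Key L × Key L,
      (if lenKey q.1 = l1 ∧ lenKey q.2 = l2 then idealWt q.1 q.2 else 0) = 1 := by
  rw [Fintype.sum_prod_type]
  have : ∀ k1 : Key L, ∑ k2 : Key L,
      (if lenKey k1 = l1 ∧ lenKey k2 = l2 then idealWt k1 k2 else 0)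
      = if lenKey k1 = l1 then (2:ℝ) ^ (-((lenKey k1 : ℕ) : ℤ)) else 0 := by
    intro k1
    by_cases h : lenKey k1 = l1
    · simp only [h, true_and, if_true]
      rw [sum_idealWt k1 l2, h]
    · simp [h]
  simp only [this]
  rw [sum_key_len l1 (fun k => (2:ℝ) ^ (-((lenKey k : ℕ) : ℤ)))]
  simp only [lenKey, Finset.sum_const, Finset.card_univ, Fintype.card_fun,
    Fintype.card_bool, Fintype.card_fin, nsmul_eq_mul]
  push_cast
  rw [← zpow_natCast (2:ℝ) (l1:ℕ), ← zpow_add₀ (by norm_num : (2:ℝ) ≠ 0)]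
  simp


lemma ite_sum {M α : Type*} [AddCommMonoid M] [Fintype α] (P : Prop) [Decidable P]
    (f : α → M) : (if P then ∑ x, f x else 0) = ∑ x, if P then f x else 0 := by
  split <;> simp

lemma sum_fst_eq {α β M : Type*} [Fintype α] [Fintype β] [DecidableEq α] [AddCommMonoid M]
    (a : α) (f : α × β → M) :
    ∑ q : α × β, (if q.1 = a then f q else 0) = ∑ y : β, f (a, y) := by
  rw [Fintype.sum_prod_type]
  rw [Finset.sum_eq_single a] <;> simp +contextual

lemma sum_snd_eq {α β M : Type*} [Fintype α] [Fintype β] [DecidableEq β] [AddCommMonoid M]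
    (b : β) (f : α × β → M) :
    ∑ q : α × β, (if q.2 = b then f q else 0) = ∑ x : α, f (x, b) := by
  rw [Fintype.sum_prod_type_right]
  rw [Finset.sum_eq_single b] <;> simp +contextual

lemma sum_idealWt' {L : ℕ} (kA : Key L) (l : Fin (L+1)) :
    ∑ k : Key L, (if l = lenKey k then idealWt kA k else 0)
      = (2:ℝ) ^ (-((lenKey kA : ℕ) : ℤ)) := by
  rw [← sum_idealWt kA l]
  exact Finset.sum_congr rfl fun k _ => if_congr eq_comm rfl rfl

lemma sum_idealWt_left' {L : ℕ} (kB : Key L) (l : Fin (L+1)) :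
    ∑ k : Key L, (if l = lenKey k then idealWt k kB else 0)
      = (2:ℝ) ^ (-((lenKey kB : ℕ) : ℤ)) := by
  rw [← sum_idealWt' kB l]
  apply Finset.sum_congr rfl
  intro k _
  rw [idealWt_comm]

lemma sum_sum_idealWt' {L : ℕ} (l1 l2 : Fin (L+1)) :
    ∑ q : Key L × Key L,
      (if l1 = lenKey q.1 ∧ l2 = lenKey q.2 then idealWt q.1 q.2 else 0) = 1 := by
  rw [← sum_sum_idealWt l1 l2]
  exact Finset.sum_congr rfl fun q _ =>
    if_congr (and_congr eq_comm eq_comm) rfl rfl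

lemma coeff_eq {L : ℕ} {C : Type*} (a b : C → Bool) (c : C) (kA kB : Key L)
    (r : Key L × Key L) :
    (∑ q : Key L × Key L,
        if keyErase a b c q = (kA, kB) ∧
           lenKey r.1 = lenKey q.1 ∧ lenKey r.2 = lenKey q.2
          then idealWt q.1 q.2 else 0)
    = if lenKey (keyErase a b c r).1 = lenKey kA ∧
         lenKey (keyErase a b c r).2 = lenKey kB
        then idealWt kA kB else 0 := by
  rcases ha : a c <;> rcases hb : b c <;>
    simp only [keyErase, ha, hb, if_true, if_false, Bool.false_eq_true,
      Bool.true_eq_false, ite_true, ite_false]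
  · -- a c = false, b c = false
    by_cases hA : ((botKey L, botKey L) : Key L × Key L) = (kA, kB)
    · rw [Prod.ext_iff] at hA
      obtain ⟨h1, h2⟩ := hA
      subst h1; subst h2
      simp only [Prod.mk.injEq, and_self, true_and]
      rw [sum_sum_idealWt']
      rw [if_pos trivial, idealWt_bot]
      simp [lenKey, botKey]
    · rw [Prod.ext_iff] at hA
      have h0 : ∀ q : Key L × Key L,
          (if ((botKey L : Key L) = kA ∧ (botKey L : Key L) = kB) ∧
              lenKey r.1 = lenKey q.1 ∧ lenKey r.2 = lenKey q.2
            then idealWt q.1 q.2 else 0) = 0 := by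
        intro q
        rw [if_neg]
        rintro ⟨h1, -⟩
        exact hA h1
      simp only [Prod.mk.injEq, h0, Finset.sum_const_zero]
      rw [if_neg]
      rintro ⟨h1, h2⟩
      exact hA ⟨(lenKey_eq_zero h1.symm).symm, (lenKey_eq_zero h2.symm).symm⟩
  · -- a c = false, b c = true
    by_cases hA : (botKey L : Key L) = kA
    · subst hA
      simp only [Prod.mk.injEq, true_and]
      have h1 : ∀ x : Key L × Key L,
          (if x.2 = kB ∧ lenKey r.1 = lenKey x.1 ∧ lenKey r.2 = lenKey x.2
            then idealWt x.1 x.2 else 0)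
          = if x.2 = kB then
              (if lenKey r.2 = lenKey kB then
                (if lenKey r.1 = lenKey x.1 then idealWt x.1 x.2 else 0) else 0)
            else 0 := by
        intro x
        rw [← ite_and, ← ite_and]
        refine if_congr ?_ rfl rfl
        constructor
        · rintro ⟨h1, h2, h3⟩; subst h1; exact ⟨⟨rfl, h3⟩, h2⟩
        · rintro ⟨⟨h1, h3⟩, h2⟩; subst h1; exact ⟨rfl, h2, h3⟩
      simp only [h1]
      rw [sum_snd_eq kB (fun x => if lenKey r.2 = lenKey kB then
            (if lenKey r.1 = lenKey x.1 then idealWt x.1 x.2 else 0) else 0)]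
      rw [← ite_sum, sum_idealWt_left' kB (lenKey r.1)]
      rw [idealWt_comm (botKey L) kB, idealWt_bot kB]
    · have h0 : ∀ q : Key L × Key L,
          (if ((botKey L : Key L) = kA ∧ q.2 = kB) ∧
              lenKey r.1 = lenKey q.1 ∧ lenKey r.2 = lenKey q.2
            then idealWt q.1 q.2 else 0) = 0 := by
        intro q
        rw [if_neg]
        rintro ⟨⟨h1, -⟩, -⟩
        exact hA h1
      simp only [Prod.mk.injEq, h0, Finset.sum_const_zero]
      rw [if_neg]
      rintro ⟨h1, -⟩
      exact hA (lenKey_eq_zero h1.symm).symm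
  · -- a c = true, b c = false
    by_cases hB : (botKey L : Key L) = kB
    · subst hB
      simp only [Prod.mk.injEq, and_true]
      have h1 : ∀ x : Key L × Key L,
          (if x.1 = kA ∧ lenKey r.1 = lenKey x.1 ∧ lenKey r.2 = lenKey x.2
            then idealWt x.1 x.2 else 0)
          = if x.1 = kA then
              (if lenKey r.1 = lenKey kA then
                (if lenKey r.2 = lenKey x.2 then idealWt x.1 x.2 else 0) else 0)
            else 0 := by
        intro x
        rw [← ite_and, ← ite_and]
        refine if_congr ?_ rfl rfl
        constructor
        · rintro ⟨h1, h2, h3⟩; subst h1; exact ⟨⟨rfl, h2⟩, h3⟩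
        · rintro ⟨⟨h1, h2⟩, h3⟩; subst h1; exact ⟨rfl, h2, h3⟩
      simp only [h1]
      rw [sum_fst_eq kA (fun x => if lenKey r.1 = lenKey kA then
            (if lenKey r.2 = lenKey x.2 then idealWt x.1 x.2 else 0) else 0)]
      rw [← ite_sum, sum_idealWt' kA (lenKey r.2)]
      rw [idealWt_bot kA]
    · have h0 : ∀ q : Key L × Key L,
          (if (q.1 = kA ∧ (botKey L : Key L) = kB) ∧
              lenKey r.1 = lenKey q.1 ∧ lenKey r.2 = lenKey q.2
            then idealWt q.1 q.2 else 0) = 0 := by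
        intro q
        rw [if_neg]
        rintro ⟨⟨-, h2⟩, -⟩
        exact hB h2
      simp only [Prod.mk.injEq, h0, Finset.sum_const_zero]
      rw [if_neg]
      rintro ⟨-, h2⟩
      exact hB (lenKey_eq_zero h2.symm).symm
  · -- a c = true, b c = true
    simp only [Prod.mk.eta]
    have h1 : ∀ q : Key L × Key L,
        (if q = (kA, kB) ∧ lenKey r.1 = lenKey q.1 ∧ lenKey r.2 = lenKey q.2
          then idealWt q.1 q.2 else 0)
        = if q = (kA, kB) then
            (if lenKey r.1 = lenKey q.1 ∧ lenKey r.2 = lenKey q.2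
              then idealWt q.1 q.2 else 0) else 0 := fun q => by rw [ite_and]
    simp only [h1]
    rw [Finset.sum_ite_eq' Finset.univ ((kA, kB) : Key L × Key L)
      (fun q => if lenKey r.1 = lenKey q.1 ∧ lenKey r.2 = lenKey q.2
        then idealWt q.1 q.2 else 0)]
    simp

/-- The classically controlled key-erasure update commutes with the ideal map. -/
theorem updateMap_comm_idealMap (L : ℕ) (C d : Type*) (a b : C → Bool)
    (ρ : Key L × Key L × C → Matrix d d ℂ) :
    updateMap a b (idealMap ρ) = idealMap (updateMap a b ρ) := by
  funext p
  obtain ⟨kA, kB, c⟩ := p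
  have hL : updateMap a b (idealMap ρ) (kA, kB, c)
      = ∑ r : Key L × Key L,
          (∑ q : Key L × Key L,
            if keyErase a b c q = (kA, kB) ∧
               lenKey r.1 = lenKey q.1 ∧ lenKey r.2 = lenKey q.2
              then idealWt q.1 q.2 else 0) • ρ (r.1, r.2, c) := by
    simp only [updateMap, idealMap]
    have step1 : ∀ q : Key L × Key L,
        (if keyErase a b c q = (kA, kB) then
          idealWt q.1 q.2 • ∑ r : Key L × Key L,
            (if lenKey r.1 = lenKey q.1 ∧ lenKey r.2 = lenKey q.2
              then ρ (r.1, r.2, c) else 0) else 0)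
        = ∑ r : Key L × Key L,
            (if keyErase a b c q = (kA, kB) ∧
               lenKey r.1 = lenKey q.1 ∧ lenKey r.2 = lenKey q.2
              then idealWt q.1 q.2 else 0) • ρ (r.1, r.2, c) := by
      intro q
      rw [Finset.smul_sum, ite_sum]
      apply Finset.sum_congr rfl
      intro r _
      rw [smul_ite, smul_zero, ← ite_and, ite_smul, zero_smul]
    simp only [step1]
    rw [Finset.sum_comm]
    refine Finset.sum_congr rfl fun r _ => ?_
    rw [Finset.sum_smul]
  have hR : idealMap (updateMap a b ρ) (kA, kB, c)
      = ∑ r : Key L × Key L,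
          (if lenKey (keyErase a b c r).1 = lenKey kA ∧
              lenKey (keyErase a b c r).2 = lenKey kB
            then idealWt kA kB else 0) • ρ (r.1, r.2, c) := by
    simp only [idealMap, updateMap]
    rw [Finset.smul_sum]
    have step1 : ∀ r : Key L × Key L,
        idealWt kA kB • (if lenKey r.1 = lenKey kA ∧ lenKey r.2 = lenKey kB then
            ∑ q : Key L × Key L,
              (if keyErase a b c q = (r.1, r.2) then ρ (q.1, q.2, c) else 0)
          else 0)
        = ∑ q : Key L × Key L,
            (if keyErase a b c q = (r.1, r.2) ∧
               lenKey r.1 = lenKey kA ∧ lenKey r.2 = lenKey kB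
              then idealWt kA kB else 0) • ρ (q.1, q.2, c) := by
      intro r
      rw [smul_ite, smul_zero, Finset.smul_sum, ite_sum]
      refine Finset.sum_congr rfl fun q _ => ?_
      rw [smul_ite, smul_zero, ← ite_and, ite_smul, zero_smul]
      exact if_congr and_comm rfl rfl
    simp only [step1]
    rw [Finset.sum_comm]
    refine Finset.sum_congr rfl fun q _ => ?_
    simp only [Prod.mk.eta]
    have h2 : ∀ r : Key L × Key L,
        (if keyErase a b c q = r ∧ lenKey r.1 = lenKey kA ∧ lenKey r.2 = lenKey kB
          then idealWt kA kB else 0) • ρ (q.1, q.2, c)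
        = (if keyErase a b c q = r then
            (if lenKey r.1 = lenKey kA ∧ lenKey r.2 = lenKey kB
              then idealWt kA kB else 0) else 0) • ρ (q.1, q.2, c) := fun r => by
      rw [ite_and]
    simp only [h2]
    rw [← Finset.sum_smul]
    rw [Finset.sum_ite_eq Finset.univ (keyErase a b c q)
      (fun r => if lenKey r.1 = lenKey kA ∧ lenKey r.2 = lenKey kB
        then idealWt kA kB else 0)]
    simp
  rw [hL, hR]
  refine Finset.sum_congr rfl fun r _ => ?_
  rw [coeff_eq]
end
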